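/- Let $H$ be a Hopf algebra, $x \in H$, and $g \in H$ a grouplike element. Then for all $n \geq 1$, the $n$-th Sweedler power of $xg$ is $(xg)^{[n]} = x_{(1)} \varphi(x_{(2)}) \cdots \varphi^{n-1}(x_{(n)}) \cdot g^n$, where $\varphi(a) = g a g^{-1}$. -/

import Mathlib

open TensorProduct

variable {k H : Type*} [Field k] [Ring H] [HopfAlgebra k H]

/-- Convolution product of two linear endomorphisms of a Hopf algebra:
`(f ⋆ g)(h) = f(h₍₁₎) g(h₍₂₎)`. -/
noncomputable def convProd (f g : H →ₗ[k] H) : H →ₗ[k] H :=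
  LinearMap.mul' k H ∘ₗ TensorProduct.map f g ∘ₗ Coalgebra.comul

/-- The `n`-th Sweedler power map: `n`-th convolution power of the identity. -/
noncomputable def sweedlerPow (k H : Type*) [Field k] [Ring H] [HopfAlgebra k H] :
    ℕ → (H →ₗ[k] H)
  | 0 => (Algebra.linearMap k H) ∘ₗ Coalgebra.counit
  | n + 1 => convProd LinearMap.id (sweedlerPow k H n)

/-- The convolution product `id ⋆ φ ⋆ φ² ⋆ ⋯ ⋆ φ^(n-1)` for a linear map `φ`. -/
noncomputable def twistedPow (φ : Module.End k H) : ℕ → (H →ₗ[k] H)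
  | 0 => (Algebra.linearMap k H) ∘ₗ Coalgebra.counit
  | n + 1 => convProd (twistedPow φ n) (φ ^ n)

lemma convProd_repr (f g : H →ₗ[k] H) {x : H} {ι : Type*} (r : Coalgebra.Repr k x ι) :
    convProd f g x = ∑ i ∈ r.index, f (r.left i) * g (r.right i) := by
  simp only [convProd, LinearMap.comp_apply, ← r.eq, map_sum, TensorProduct.map_tmul,
    LinearMap.mul'_apply]

lemma convProd_assoc (f g h : H →ₗ[k] H) :
    convProd (convProd f g) h = convProd f (convProd g h) := by
  ext x
  set r := Coalgebra.Repr.arbitrary k x with hr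
  set a₁ : ∀ i : H × H, Coalgebra.Repr k (r.left i) (H × H) :=
    fun i => Coalgebra.Repr.arbitrary k (r.left i) with ha₁
  set a₂ : ∀ i : H × H, Coalgebra.Repr k (r.right i) (H × H) :=
    fun i => Coalgebra.Repr.arbitrary k (r.right i) with ha₂
  have key := Coalgebra.sum_map_tmul_tmul_eq (R := k) f g h x (repr := r) (a₁ := a₁) (a₂ := a₂)
  have key2 := congrArg (LinearMap.mul' k H ∘ₗ LinearMap.lTensor H (LinearMap.mul' k H)) key
  simp only [map_sum, LinearMap.comp_apply, LinearMap.lTensor_tmul,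
    LinearMap.mul'_apply] at key2
  calc convProd (convProd f g) h x
      = ∑ i ∈ r.index, convProd f g (r.left i) * h (r.right i) := convProd_repr _ _ r
    _ = ∑ i ∈ r.index, (∑ j ∈ (a₁ i).index, f ((a₁ i).left j) * g ((a₁ i).right j))
          * h (r.right i) := by
        exact Finset.sum_congr rfl fun i _ => by rw [convProd_repr f g (a₁ i)]
    _ = ∑ i ∈ r.index, ∑ j ∈ (a₁ i).index,
          f ((a₁ i).left j) * (g ((a₁ i).right j) * h (r.right i)) := by
        simp [Finset.sum_mul, mul_assoc]
    _ = ∑ i ∈ r.index, ∑ j ∈ (a₂ i).index,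
          f (r.left i) * (g ((a₂ i).left j) * h ((a₂ i).right j)) := key2.symm
    _ = convProd f (convProd g h) x := by
        rw [convProd_repr f (convProd g h) r]
        exact Finset.sum_congr rfl fun i _ => by
          rw [convProd_repr g h (a₂ i), Finset.mul_sum]

lemma convProd_counit_right (f : H →ₗ[k] H) :
    convProd f ((Algebra.linearMap k H) ∘ₗ Coalgebra.counit) = f := by
  ext x
  set r := Coalgebra.Repr.arbitrary k x with hr
  have key := congrArg (f ∘ₗ (TensorProduct.rid k H).toLinearMap)
    (Coalgebra.sum_tmul_counit_eq r)
  simp only [map_sum, LinearMap.comp_apply, LinearEquiv.coe_coe, TensorProduct.rid_tmul,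
    map_smul, one_smul] at key
  rw [convProd_repr f _ r, ← key]
  exact Finset.sum_congr rfl fun i _ => by
    rw [LinearMap.comp_apply, Algebra.linearMap_apply, ← Algebra.commutes, ← Algebra.smul_def]

lemma convProd_counit_left (f : H →ₗ[k] H) :
    convProd ((Algebra.linearMap k H) ∘ₗ Coalgebra.counit) f = f := by
  ext x
  set r := Coalgebra.Repr.arbitrary k x with hr
  have key := congrArg (f ∘ₗ (TensorProduct.lid k H).toLinearMap)
    (Coalgebra.sum_counit_tmul_eq r)
  simp only [map_sum, LinearMap.comp_apply, LinearEquiv.coe_coe, TensorProduct.lid_tmul,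
    map_smul, one_smul] at key
  rw [convProd_repr _ f r, ← key]
  exact Finset.sum_congr rfl fun i _ => by
    rw [LinearMap.comp_apply, Algebra.linearMap_apply, ← Algebra.smul_def]

lemma comp_convProd (φ f g : H →ₗ[k] H) (hφ : ∀ a b : H, φ (a * b) = φ a * φ b) :
    φ ∘ₗ convProd f g = convProd (φ ∘ₗ f) (φ ∘ₗ g) := by
  ext x
  set r := Coalgebra.Repr.arbitrary k x with hr
  rw [LinearMap.comp_apply, convProd_repr f g r, convProd_repr _ _ r, map_sum]
  exact Finset.sum_congr rfl fun i _ => hφ _ _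

/-- For `x ∈ H` and a grouplike `g ∈ H`, the `n`-th Sweedler power of `x g` is
`(xg)^[n] = x₍₁₎ φ(x₍₂₎) ⋯ φ^(n-1)(x₍ₙ₎) ⬝ gⁿ`, where `φ(a) = g a g⁻¹` (and `g⁻¹ = S(g)`). -/
theorem sweedlerPow_mul_grouplike (x g : H)
    (hg : Coalgebra.comul (R := k) g = g ⊗ₜ[k] g)
    (hε : Coalgebra.counit (R := k) g = 1) :
    ∀ n : ℕ, 1 ≤ n →
      sweedlerPow k H n (x * g)
        = twistedPow
            (LinearMap.mulLeft k g ∘ₗ LinearMap.mulRight k (HopfAlgebra.antipode (R := k) g))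
            n x * g ^ n := by
  set Sg := HopfAlgebra.antipode (R := k) g with hSgdef
  set φ : Module.End k H :=
    LinearMap.mulLeft k g ∘ₗ LinearMap.mulRight k (HopfAlgebra.antipode (R := k) g) with hφdef
  have hφ_apply : ∀ a : H, φ a = g * (a * Sg) := fun a => rfl
  -- g * Sg = 1 and Sg * g = 1
  have hgS : g * Sg = 1 := by
    have := HopfAlgebra.mul_antipode_lTensor_comul_apply (R := k) g
    rw [hg] at this
    simpa [hε] using this
  have hSg : Sg * g = 1 := by
    have := HopfAlgebra.mul_antipode_rTensor_comul_apply (R := k) g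
    rw [hg] at this
    simpa [hε] using this
  -- φ is multiplicative
  have hφmul : ∀ a b : H, φ (a * b) = φ a * φ b := by
    intro a b
    simp only [hφ_apply, mul_assoc]
    rw [← mul_assoc Sg g, hSg, one_mul]
  have hφ_alg : ∀ c : k, φ (algebraMap k H c) = algebraMap k H c := by
    intro c
    rw [Algebra.algebraMap_eq_smul_one, map_smul, hφ_apply, one_mul, hgS]
  have hφηε : φ ∘ₗ ((Algebra.linearMap k H) ∘ₗ Coalgebra.counit (R := k) (A := H)) =
      (Algebra.linearMap k H) ∘ₗ Coalgebra.counit (R := k) (A := H) := by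
    ext y
    simp only [LinearMap.comp_apply, Algebra.linearMap_apply]
    exact hφ_alg _
  -- twistedPow satisfies a "left" recursion as well
  have htw : ∀ n : ℕ, twistedPow φ (n + 1) = convProd LinearMap.id (φ ∘ₗ twistedPow φ n) := by
    intro n
    induction n with
    | zero =>
        show convProd (twistedPow φ 0) (φ ^ 0) = _
        rw [pow_zero, show twistedPow φ 0 = (Algebra.linearMap k H) ∘ₗ Coalgebra.counit from rfl,
          hφηε, Module.End.one_eq_id, convProd_counit_left, convProd_counit_right]
    | succ n ih =>
        show convProd (twistedPow φ (n + 1)) (φ ^ (n + 1)) = _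
        conv_lhs => rw [ih, convProd_assoc]
        conv_rhs => rw [show twistedPow φ (n + 1) = convProd (twistedPow φ n) (φ ^ n) from rfl,
          comp_convProd φ _ _ hφmul]
        rw [pow_succ' φ n, Module.End.mul_eq_comp]
  -- main induction
  have key : ∀ n : ℕ, ∀ y : H,
      sweedlerPow k H (n + 1) (y * g) = twistedPow φ (n + 1) y * g ^ (n + 1) := by
    intro n
    induction n with
    | zero =>
        intro y
        show convProd LinearMap.id (sweedlerPow k H 0) (y * g) = _
        rw [show sweedlerPow k H 0 = (Algebra.linearMap k H) ∘ₗ Coalgebra.counit from rfl,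
          convProd_counit_right, htw 0,
          show twistedPow φ 0 = (Algebra.linearMap k H) ∘ₗ Coalgebra.counit from rfl,
          hφηε, convProd_counit_right, pow_one]
        rfl
    | succ n ih =>
        intro y
        set r := Coalgebra.Repr.arbitrary k y with hr
        have heq : ∑ i ∈ r.index, (r.left i * g) ⊗ₜ[k] (r.right i * g)
            = Coalgebra.comul (R := k) (y * g) := by
          rw [Bialgebra.comul_mul, hg, ← r.eq, Finset.sum_mul]
          exact Finset.sum_congr rfl fun i _ => by
            rw [Algebra.TensorProduct.tmul_mul_tmul]
        set r' : Coalgebra.Repr k (y * g) (H × H) :=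
          ⟨r.index, fun i => r.left i * g, fun i => r.right i * g, heq⟩ with hr'
        have hterm : ∀ l t : H,
            (l * g) * (t * g ^ (n + 1)) = (l * (g * (t * Sg))) * g ^ (n + 1 + 1) := by
          intro l t
          rw [pow_succ' g (n + 1)]
          simp only [mul_assoc]
          rw [← mul_assoc Sg g, hSg, one_mul]
        calc sweedlerPow k H (n + 1 + 1) (y * g)
            = convProd LinearMap.id (sweedlerPow k H (n + 1)) (y * g) := rfl
          _ = ∑ i ∈ r.index, (r.left i * g) * sweedlerPow k H (n + 1) (r.right i * g) := by
              rw [convProd_repr _ _ r']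
              exact Finset.sum_congr rfl fun i _ => rfl
          _ = ∑ i ∈ r.index, (r.left i * g) * (twistedPow φ (n + 1) (r.right i) * g ^ (n + 1)) := by
              exact Finset.sum_congr rfl fun i _ => by rw [ih]
          _ = ∑ i ∈ r.index,
                (r.left i * (g * (twistedPow φ (n + 1) (r.right i) * Sg))) * g ^ (n + 1 + 1) := by
              exact Finset.sum_congr rfl fun i _ => hterm _ _
          _ = convProd LinearMap.id (φ ∘ₗ twistedPow φ (n + 1)) y * g ^ (n + 1 + 1) := by
              rw [convProd_repr _ _ r, Finset.sum_mul]
              exact Finset.sum_congr rfl fun i _ => rfl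
          _ = twistedPow φ (n + 1 + 1) y * g ^ (n + 1 + 1) := by rw [← htw (n + 1)]
  intro n hn
  match n, hn with
  | (m + 1), _ => exact key m x
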